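/- Let r₁ ≥ ... ≥ r_M ∈ (0,1) be distinct with positive integer multiplicities m₁,...,m_M, let D_ℓ be the unique real solution of (1/m_M)(r_M^{-1})^{D_ℓ} + ∑_{k=1}^{M-1}(m_k/m_M)(r_k/r_M)^{D_ℓ} = 1, and let f(s) = 1 - ∑_{k=1}^M m_k r_k^s for s ∈ ℂ. Then for every s with Re(s) < D_ℓ, |f(s)| ≥ m_M r_M^{Re(s)}(1 - p(Re(s))) > 0, where p(t) = (1/m_M)(r_M^{-1})^t + ∑_{k=1}^{M-1}(m_k/m_M)(r_k/r_M)^t. In particular f has no zeros in the half-plane {Re(s) < D_ℓ}. -/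

import Mathlib

open Finset

/-- Lower bound for the denominator of the scaling zeta function to the left of
the lower similarity dimension; in particular it has no zeros there. -/
theorem zeta_denominator_lower_bound
    (M : ℕ) (r : Fin (M+1) → ℝ) (m : Fin (M+1) → ℕ)
    (hr : ∀ i, r i ∈ Set.Ioo (0:ℝ) 1) (hm : ∀ i, 0 < m i)
    (hanti : ∀ i j : Fin (M+1), i ≤ j → r j ≤ r i)
    (hinj : Function.Injective r)
    (p : ℝ → ℝ)
    (hp : p = fun t =>
      (1 / (m (Fin.last M) : ℝ)) * (r (Fin.last M))⁻¹ ^ t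
        + ∑ k : Fin M,
            ((m k.castSucc : ℝ) / (m (Fin.last M) : ℝ))
              * (r k.castSucc / r (Fin.last M)) ^ t)
    (D : ℝ) (hD : p D = 1) (s : ℂ) (hs : s.re < D) :
    (m (Fin.last M) : ℝ) * r (Fin.last M) ^ s.re * (1 - p s.re)
        ≤ ‖(1 - ∑ k : Fin (M+1), (m k : ℂ) * (r k : ℂ) ^ s)‖ ∧
    0 < (m (Fin.last M) : ℝ) * r (Fin.last M) ^ s.re * (1 - p s.re) ∧
    (1 - ∑ k : Fin (M+1), (m k : ℂ) * (r k : ℂ) ^ s) ≠ 0 := by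
  set σ := s.re with hσ
  have hrM := hr (Fin.last M)
  have hmM : (0:ℝ) < m (Fin.last M) := Nat.cast_pos.mpr (hm _)
  have hrMσ : (0:ℝ) < r (Fin.last M) ^ σ := Real.rpow_pos_of_pos hrM.1 _
  have hratio : ∀ k : Fin M, 1 < r k.castSucc / r (Fin.last M) := by
    intro k
    rw [lt_div_iff₀ hrM.1, one_mul]
    have hle := hanti k.castSucc (Fin.last M) (Fin.le_last _)
    rcases hle.lt_or_eq with h | h
    · exact h
    · exact absurd (hinj h) (Fin.castSucc_lt_last k).ne'
  have hpσ : p σ < 1 := by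
    rw [← hD, hp]
    dsimp only
    have h1 : (1:ℝ) < (r (Fin.last M))⁻¹ := (one_lt_inv₀ hrM.1).mpr hrM.2
    apply add_lt_add_of_lt_of_le
    · exact mul_lt_mul_of_pos_left (Real.rpow_lt_rpow_of_exponent_lt h1 hs)
        (by positivity)
    · apply Finset.sum_le_sum
      intro k _
      have := hm k.castSucc
      exact mul_le_mul_of_nonneg_left
        (Real.rpow_le_rpow_of_exponent_le (hratio k).le hs.le) (by positivity)
  have hkey : (m (Fin.last M) : ℝ) * r (Fin.last M) ^ σ * p σ
      = 1 + ∑ k : Fin M, (m k.castSucc : ℝ) * r k.castSucc ^ σ := by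
    rw [hp]
    dsimp only
    rw [mul_add, Finset.mul_sum]
    congr 1
    · rw [Real.inv_rpow hrM.1.le]
      field_simp
    · apply Finset.sum_congr rfl
      intro k _
      rw [Real.div_rpow (hr k.castSucc).1.le hrM.1.le]
      field_simp
  have habs : ∀ k : Fin (M+1), ‖(m k : ℂ) * (r k : ℂ) ^ s‖
      = (m k : ℝ) * r k ^ σ := by
    intro k
    rw [norm_mul, Complex.norm_cpow_eq_rpow_re_of_pos (hr k).1]
    simp [hσ]
  have hpos : 0 < (m (Fin.last M) : ℝ) * r (Fin.last M) ^ σ * (1 - p σ) := by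
    have : 0 < 1 - p σ := by linarith
    positivity
  have hbound : (m (Fin.last M) : ℝ) * r (Fin.last M) ^ σ * (1 - p σ)
      ≤ ‖(1 - ∑ k : Fin (M+1), (m k : ℂ) * (r k : ℂ) ^ s)‖ := by
    have hsplit : (1:ℂ) - ∑ k : Fin (M+1), (m k : ℂ) * (r k : ℂ) ^ s
        = -(((m (Fin.last M) : ℂ) * (r (Fin.last M) : ℂ) ^ s)
          - (1 - ∑ k : Fin M, (m k.castSucc : ℂ) * (r k.castSucc : ℂ) ^ s)) := by
      rw [Fin.sum_univ_castSucc]; ring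
    rw [hsplit, norm_neg]
    have htri := norm_sub_norm_le ((m (Fin.last M) : ℂ) * (r (Fin.last M) : ℂ) ^ s)
      ((1:ℂ) - ∑ k : Fin M, (m k.castSucc : ℂ) * (r k.castSucc : ℂ) ^ s)
    refine le_trans ?_ htri
    rw [habs (Fin.last M)]
    have hA : ‖(1:ℂ) - ∑ k : Fin M, (m k.castSucc : ℂ) * (r k.castSucc : ℂ) ^ s‖
        ≤ 1 + (∑ k : Fin M, (m k.castSucc : ℝ) * r k.castSucc ^ σ) := by
      refine le_trans (norm_sub_le_norm_sub_add_norm_sub _ 0 _) ?_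
      simp only [sub_zero, zero_sub, norm_neg, norm_one]
      gcongr
      refine le_trans (norm_sum_le _ _) ?_
      apply le_of_eq
      exact Finset.sum_congr rfl (fun k _ => habs k.castSucc)
    have := hkey
    rw [mul_sub, mul_one, hkey]
    linarith
  refine ⟨hbound, hpos, ?_⟩
  intro h
  rw [h] at hbound
  simp at hbound
  linarith
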